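/- arXiv:1711.05473 — 3 statements merged into one kernel-verified Lean document; each statement's English description precedes it below -/
import Mathlib

section
/- Suppose a finite hypergraph H on n vertices admits, for every induced subhypergraph (obtained by restricting to a subset of vertices and keeping the traces of hyperedges that remain of size at least 2), a proper coloring with at most c ≥ 2 colors. Then H admits a conflict-free coloring with O(log n) colors; more precisely, with at most ⌈log_{c/(c-1)} n⌉ + 1 colors. -/
/-- Smorodinsky's framework: if every induced subhypergraph of a finite hypergraph `H`
on `n` vertices admits a proper coloring with `c ≥ 2` colors, then `H` admits a
conflict-free coloring with at most `⌈log_{c/(c-1)} n⌉ + 1` colors. -/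
theorem conflict_free_from_proper {V : Type*} [Fintype V] [DecidableEq V]
    (H : Set (Finset V)) (hH : ∀ e ∈ H, 2 ≤ e.card) (c : ℕ) (hc : 2 ≤ c)
    (hprop : ∀ S : Finset V, ∃ φ : V → Fin c,
      ∀ e ∈ H, 2 ≤ (e ∩ S).card → ∃ u ∈ e ∩ S, ∃ v ∈ e ∩ S, φ u ≠ φ v) :
    ∃ φ : V → Fin (⌈Real.logb ((c : ℝ) / ((c : ℝ) - 1)) (Fintype.card V)⌉₊ + 1),
      ∀ e ∈ H, ∃ v ∈ e, ∀ u ∈ e, u ≠ v → φ u ≠ φ v := by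
  classical
  set n := Fintype.card V with hn
  set k := ⌈Real.logb ((c : ℝ) / ((c : ℝ) - 1)) (n : ℝ)⌉₊ with hk
  choose col hcol using hprop
  -- choose the largest color class of each finset
  have hM : ∀ T : Finset V, ∃ MT : Finset V, MT ⊆ T ∧ T.card ≤ c * MT.card ∧
      ∃ j : Fin c, MT = T.filter (fun x => col T x = j) := by
    intro T
    obtain ⟨j, -, hj⟩ := Finset.exists_max_image (Finset.univ : Finset (Fin c))
      (fun j => (T.filter (fun x => col T x = j)).card)
      ⟨⟨0, by omega⟩, Finset.mem_univ _⟩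
    refine ⟨T.filter (fun x => col T x = j), Finset.filter_subset _ _, ?_, j, rfl⟩
    have hpart : T.card = ∑ i : Fin c, (T.filter (fun x => col T x = i)).card :=
      Finset.card_eq_sum_card_fiberwise (fun x _ => Finset.mem_univ (col T x))
    calc T.card = ∑ i : Fin c, (T.filter (fun x => col T x = i)).card := hpart
      _ ≤ ∑ _i : Fin c, (T.filter (fun x => col T x = j)).card :=
          Finset.sum_le_sum (fun i _ => hj i (Finset.mem_univ i))
      _ = c * (T.filter (fun x => col T x = j)).card := by
          simp [Finset.sum_const, mul_comm]
  choose M hM1 hM2 hM3 using hM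
  -- the iteration
  set S : ℕ → Finset V := fun m => Nat.rec Finset.univ (fun _ T => T \ M T) m with hS
  have hS0 : S 0 = Finset.univ := rfl
  have hSsucc : ∀ i, S (i + 1) = S i \ M (S i) := fun i => rfl
  have hsub : ∀ i, S (i + 1) ⊆ S i := fun i => by
    rw [hSsucc]; exact Finset.sdiff_subset
  have hanti : ∀ i j, i ≤ j → S j ⊆ S i := by
    intro i j hij
    induction j with
    | zero => have : i = 0 := Nat.le_zero.mp hij; simp [this]
    | succ m ih =>
        rcases Nat.lt_or_ge i (m+1) with h | h
        · exact (hsub m).trans (ih (by omega))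
        · have : i = m + 1 := by omega
          simp [this]
  -- cardinality decay
  have hcard : ∀ i, c ^ i * (S i).card ≤ (c - 1) ^ i * n := by
    intro i
    induction i with
    | zero => simpa [hS0, hn] using (Finset.card_le_univ _ : (Finset.univ : Finset V).card ≤ n)
    | succ m ih =>
        have hmle : (M (S m)).card ≤ (S m).card := Finset.card_le_card (hM1 _)
        have hdiff : (S (m+1)).card + (M (S m)).card = (S m).card := by
          rw [hSsucc]
          exact Finset.card_sdiff_add_card_eq_card (hM1 _)
        have hstep : c * (S (m+1)).card ≤ (c - 1) * (S m).card := by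
          have h1 : c * (S (m+1)).card + (S m).card ≤ c * (S m).card := by
            calc c * (S (m+1)).card + (S m).card
                ≤ c * (S (m+1)).card + c * (M (S m)).card := by
                  exact Nat.add_le_add_left (hM2 _) _
              _ = c * (S m).card := by rw [← Nat.mul_add, hdiff]
          have h2 : (c - 1) * (S m).card = c * (S m).card - (S m).card := by
            rw [Nat.sub_mul, Nat.one_mul]
          omega
        calc c ^ (m+1) * (S (m+1)).card = c ^ m * (c * (S (m+1)).card) := by ring
          _ ≤ c ^ m * ((c - 1) * (S m).card) := Nat.mul_le_mul_left _ hstep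
          _ = (c - 1) * (c ^ m * (S m).card) := by ring
          _ ≤ (c - 1) * ((c - 1) ^ m * n) := Nat.mul_le_mul_left _ ih
          _ = (c - 1) ^ (m+1) * n := by ring
  -- after k steps at most 1 vertex remains
  have hreal : n * (c - 1) ^ k ≤ c ^ k := by
    rcases Nat.eq_zero_or_pos n with h0 | hpos
    · simp [h0]
    · have hc1 : (0 : ℝ) < (c : ℝ) - 1 := by
        have : (2 : ℝ) ≤ (c : ℝ) := by exact_mod_cast hc
        linarith
      have hb : (1 : ℝ) < (c : ℝ) / ((c : ℝ) - 1) := by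
        rw [lt_div_iff₀ hc1]; linarith
      have hnpos : (0 : ℝ) < (n : ℝ) := by exact_mod_cast hpos
      have hlog : Real.logb ((c : ℝ) / ((c : ℝ) - 1)) (n : ℝ) ≤ (k : ℝ) := Nat.le_ceil _
      have h1 : (n : ℝ) ≤ ((c : ℝ) / ((c : ℝ) - 1)) ^ (k : ℕ) := by
        have := Real.rpow_le_rpow_of_exponent_le (le_of_lt hb) hlog
        rw [Real.rpow_logb (by linarith) (by linarith) hnpos] at this
        rwa [Real.rpow_natCast] at this
      have h2 : (n : ℝ) * ((c : ℝ) - 1) ^ k ≤ (c : ℝ) ^ k := by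
        have hpow : (0 : ℝ) < ((c : ℝ) - 1) ^ k := pow_pos hc1 k
        calc (n : ℝ) * ((c : ℝ) - 1) ^ k
            ≤ ((c : ℝ) / ((c : ℝ) - 1)) ^ k * ((c : ℝ) - 1) ^ k := by
              exact mul_le_mul_of_nonneg_right h1 (le_of_lt hpow)
          _ = (c : ℝ) ^ k := by
              rw [div_pow, div_mul_cancel₀]
              exact ne_of_gt hpow
      have hcast : ((n * (c - 1) ^ k : ℕ) : ℝ) ≤ ((c ^ k : ℕ) : ℝ) := by
        push_cast [Nat.cast_sub (by omega : 1 ≤ c)]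
        convert h2 using 2 <;> push_cast <;> ring
      exact_mod_cast hcast
  have hSk : (S k).card ≤ 1 := by
    have h1 : c ^ k * (S k).card ≤ c ^ k * 1 := by
      calc c ^ k * (S k).card ≤ (c - 1) ^ k * n := hcard k
        _ = n * (c - 1) ^ k := by ring
        _ ≤ c ^ k := hreal
        _ = c ^ k * 1 := by ring
    exact Nat.le_of_mul_le_mul_left h1 (pow_pos (by omega) k)
  have hempty : S (k + 1) = ∅ := by
    rcases Finset.eq_empty_or_nonempty (S k) with h | h
    · rw [hSsucc, h]; simp
    · have hone : (S k).card = 1 := le_antisymm hSk (Finset.card_pos.mpr h)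
      have hMpos : 1 ≤ (M (S k)).card := by
        have h2 := hM2 (S k)
        rcases Nat.eq_zero_or_pos (M (S k)).card with h0 | h1
        · rw [h0, Nat.mul_zero] at h2; omega
        · exact h1
      have := Finset.card_sdiff_add_card_eq_card (hM1 (S k))
      rw [← hSsucc] at this
      have hle : (M (S k)).card ≤ (S k).card := Finset.card_le_card (hM1 _)
      rw [← Finset.card_eq_zero]
      omega
  -- the index of each vertex
  have hex : ∀ v : V, ∃ i, v ∉ S (i + 1) := fun v =>
    ⟨k, by rw [hempty]; exact Finset.notMem_empty v⟩
  set idx : V → ℕ := fun v => Nat.find (hex v) with hidx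
  have hidxle : ∀ v, idx v ≤ k := fun v =>
    Nat.find_min' (hex v) (by rw [hempty]; exact Finset.notMem_empty v)
  have hidxout : ∀ v, v ∉ S (idx v + 1) := fun v => Nat.find_spec (hex v)
  have hidxin : ∀ v, v ∈ S (idx v) := by
    intro v
    rcases Nat.eq_zero_or_pos (idx v) with h | h
    · rw [h, hS0]; exact Finset.mem_univ v
    · obtain ⟨m, hm⟩ := Nat.exists_eq_succ_of_ne_zero (by omega : idx v ≠ 0)
      rw [hm]
      by_contra hcon
      exact (Nat.find_min (hex v) (by omega : m < idx v)) hcon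
  have hgt : ∀ (a : V) (i : ℕ), a ∈ S (i + 1) → i < idx a := by
    intro a i ha
    by_contra hcon
    push_neg at hcon
    exact hidxout a (hanti (idx a + 1) (i + 1) (by omega) ha)
  have hinM : ∀ v, v ∈ M (S (idx v)) := by
    intro v
    have h1 := hidxin v
    have h2 := hidxout v
    rw [hSsucc, Finset.mem_sdiff] at h2
    push_neg at h2
    exact h2 h1
  -- the conflict-free coloring
  refine ⟨fun v => ⟨idx v, by have := hidxle v; omega⟩, ?_⟩
  intro e he
  have hecard := hH e he
  have henon : e.Nonempty := Finset.card_pos.mp (by omega)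
  obtain ⟨v, hve, hvmax⟩ := Finset.exists_max_image e idx henon
  refine ⟨v, hve, ?_⟩
  intro u hue hne hcontra
  have hieq : idx u = idx v := by
    have := Fin.mk.injEq (idx u) _ (idx v) _ ▸ hcontra
    exact Fin.mk_eq_mk.mp hcontra
  set i := idx v with hi
  -- u and v are both in M (S i)
  have hvM : v ∈ M (S i) := hinM v
  have huM : u ∈ M (S i) := by rw [← hieq]; exact hinM u
  have hvS : v ∈ S i := hM1 _ hvM
  have huS : u ∈ S i := hM1 _ huM
  have hcard2 : 2 ≤ (e ∩ S i).card := by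
    have : ({u, v} : Finset V) ⊆ e ∩ S i := by
      intro x hx
      rw [Finset.mem_insert, Finset.mem_singleton] at hx
      rcases hx with h | h <;> subst h <;> simp [Finset.mem_inter, hue, hve, huS, hvS]
    calc 2 = ({u, v} : Finset V).card := by rw [Finset.card_insert_of_notMem (by simpa), Finset.card_singleton]
      _ ≤ (e ∩ S i).card := Finset.card_le_card this
  obtain ⟨a, ha, b, hb, hab⟩ := hcol (S i) e he hcard2
  obtain ⟨j, hj⟩ := hM3 (S i)
  -- one of a, b is not in M (S i)
  have hnot : ∃ w ∈ e ∩ S i, w ∉ M (S i) := by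
    by_cases hcase : col (S i) a = j
    · refine ⟨b, hb, ?_⟩
      rw [hj, Finset.mem_filter]
      push_neg
      intro _ hbj
      exact hab (hcase.trans hbj.symm)
    · refine ⟨a, ha, ?_⟩
      rw [hj, Finset.mem_filter]
      push_neg
      intro _
      exact hcase
  obtain ⟨w, hw, hwM⟩ := hnot
  rw [Finset.mem_inter] at hw
  have hwS1 : w ∈ S (i + 1) := by
    rw [hSsucc, Finset.mem_sdiff]; exact ⟨hw.2, hwM⟩
  have := hgt w i hwS1
  have := hvmax w hw.1
  omega
end

section
/- (Abstract Clarkson–Shor counting) Let B be a finite family of n objects and let T be a finite set of 'k-deep configurations', where each configuration t ∈ T is determined by a set D(t) of at most 3 'defining' objects of B and a set K(t) of at most k 'killing' objects of B disjoint from D(t), such that t appears on the boundary structure of a subfamily B' ⊆ B whenever D(t) ⊆ B' and K(t) ∩ B' = ∅. Assume the map t ↦ (D(t)) is injective on configurations appearing in any fixed subfamily, and that for every subfamily B' ⊆ B the number of configurations appearing in B' is at most c|B'|. Then |T| ≤ c · 2^{k+3} · n. -/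
open scoped Classical in
/-- Abstract Clarkson–Shor counting: if each configuration `t` has at most 3 defining
objects `D t` and at most `k` killing objects `K t` (disjoint from `D t`) among `n`
objects, and for every subfamily `S` the number of configurations appearing in `S`
(i.e. with `D t ⊆ S` and `K t ∩ S = ∅`) is at most `c·|S|`, then the total number of
configurations is at most `c · 2^(k+3) · n`. -/
theorem clarkson_shor_counting {β τ : Type*} [DecidableEq β]
    (B : Finset β) (n : ℕ) (hn : B.card = n) (T : Finset τ)
    (D K : τ → Finset β) (k : ℕ) (c : ℝ) (hc : 0 ≤ c)
    (hD : ∀ t ∈ T, D t ⊆ B ∧ (D t).card ≤ 3)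
    (hK : ∀ t ∈ T, K t ⊆ B ∧ (K t).card ≤ k)
    (hdisj : ∀ t ∈ T, Disjoint (D t) (K t))
    (hcount : ∀ S ⊆ B,
      ((T.filter fun t => D t ⊆ S ∧ K t ∩ S = ∅).card : ℝ) ≤ c * S.card) :
    (T.card : ℝ) ≤ c * 2 ^ (k + 3) * n := by
  classical
  subst hn
  set n := B.card with hn
  -- per-configuration count
  have key : ∀ t ∈ T, (2:ℝ)^n ≤ 2^(k+3) *
      ((B.powerset.filter fun S => D t ⊆ S ∧ K t ∩ S = ∅).card : ℝ) := by
    intro t ht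
    obtain ⟨hDB, hD3⟩ := hD t ht
    obtain ⟨hKB, hKk⟩ := hK t ht
    have hdt := hdisj t ht
    have hfil : B.powerset.filter (fun S => D t ⊆ S ∧ K t ∩ S = ∅)
        = Finset.Icc (D t) (B \ K t) := by
      ext S
      simp only [Finset.mem_filter, Finset.mem_powerset, Finset.mem_Icc]
      constructor
      · rintro ⟨hSB, hDS, hKS⟩
        refine ⟨hDS, Finset.subset_sdiff.mpr ⟨hSB, ?_⟩⟩
        rw [disjoint_comm, Finset.disjoint_iff_inter_eq_empty]
        exact hKS
      · rintro ⟨hDS, hSsub⟩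
        obtain ⟨hSB, hd⟩ := Finset.subset_sdiff.mp hSsub
        refine ⟨hSB, hDS, ?_⟩
        rw [Finset.inter_comm]
        exact Finset.disjoint_iff_inter_eq_empty.mp hd
    have hsub : D t ⊆ B \ K t := Finset.subset_sdiff.mpr ⟨hDB, hdt⟩
    rw [hfil, Finset.card_Icc_finset hsub]
    have hcards : (B \ K t).card = n - (K t).card := Finset.card_sdiff_of_subset hKB
    have hdk : (D t).card + (K t).card ≤ n := by
      have : (D t ∪ K t).card ≤ B.card := Finset.card_le_card (Finset.union_subset hDB hKB)
      rwa [Finset.card_union_of_disjoint hdt] at this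
    have hexp : n ≤ (k + 3) + ((B \ K t).card - (D t).card) := by
      rw [hcards]; omega
    calc (2:ℝ)^n ≤ 2^((k+3) + ((B \ K t).card - (D t).card)) := by
          apply pow_le_pow_right₀ (by norm_num) hexp
      _ = 2^(k+3) * (2:ℝ)^((B \ K t).card - (D t).card) := pow_add 2 _ _
      _ = 2^(k+3) * ((2 ^ ((B \ K t).card - (D t).card) : ℕ) : ℝ) := by push_cast; ring
  -- double counting
  have fubini : ∑ t ∈ T, (B.powerset.filter fun S => D t ⊆ S ∧ K t ∩ S = ∅).card
      = ∑ S ∈ B.powerset, (T.filter fun t => D t ⊆ S ∧ K t ∩ S = ∅).card := by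
    simp only [Finset.card_filter]
    exact Finset.sum_comm
  have sumbound : (∑ S ∈ B.powerset, ((T.filter fun t => D t ⊆ S ∧ K t ∩ S = ∅).card : ℝ))
      ≤ c * n * 2^n := by
    calc (∑ S ∈ B.powerset, ((T.filter fun t => D t ⊆ S ∧ K t ∩ S = ∅).card : ℝ))
        ≤ ∑ S ∈ B.powerset, c * n := by
          apply Finset.sum_le_sum
          intro S hS
          have hSB := Finset.mem_powerset.mp hS
          refine (hcount S hSB).trans ?_
          have : (S.card : ℝ) ≤ n := by
            exact_mod_cast Finset.card_le_card hSB
          exact mul_le_mul_of_nonneg_left this hc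
      _ = c * n * 2^n := by
          rw [Finset.sum_const, Finset.card_powerset, nsmul_eq_mul]
          push_cast; ring
  have main : (T.card : ℝ) * 2^n ≤ c * 2^(k+3) * n * 2^n := by
    calc (T.card : ℝ) * 2^n = ∑ _t ∈ T, (2:ℝ)^n := by
          rw [Finset.sum_const, nsmul_eq_mul]
      _ ≤ ∑ t ∈ T, 2^(k+3) *
            ((B.powerset.filter fun S => D t ⊆ S ∧ K t ∩ S = ∅).card : ℝ) :=
          Finset.sum_le_sum key
      _ = 2^(k+3) * ∑ t ∈ T,
            ((B.powerset.filter fun S => D t ⊆ S ∧ K t ∩ S = ∅).card : ℝ) := by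
          rw [Finset.mul_sum]
      _ = 2^(k+3) * ∑ S ∈ B.powerset,
            ((T.filter fun t => D t ⊆ S ∧ K t ∩ S = ∅).card : ℝ) := by
          congr 1
          exact_mod_cast congrArg (fun m : ℕ => (m : ℝ)) fubini
      _ ≤ 2^(k+3) * (c * n * 2^n) := by
          apply mul_le_mul_of_nonneg_left sumbound (by positivity)
      _ = c * 2^(k+3) * n * 2^n := by ring
  have h2 : (0:ℝ) < 2^n := by positivity
  exact le_of_mul_le_mul_right main h2
end

section
/- Let n ≥ 3 points be placed evenly on a circle of radius 2 centered at the origin o in the plane. For each pair {i,j} let F_{ij} be the union of a disk of radius 1 + (in+j)ε centered at o with the ε'-neighborhoods (ε' = (in+j)ε) of the segments from o to p_i and from o to p_j. Then for all sufficiently small ε > 0, the region F_{ij} contains p_i and p_j but no other of the n points; consequently the intersection (here incidence) hypergraph of the point set with respect to the family {F_{ij}} contains all 2-element subsets as hyperedges, i.e., its Delaunay-graph is the complete graph K_n. -/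
open Real

/-- `n` points placed evenly on the circle of radius 2 around the origin
(identifying the plane with `ℂ`). -/
noncomputable def evenPt (n : ℕ) (k : Fin n) : ℂ :=
  2 * Complex.exp ((2 * Real.pi * (k : ℕ) / n : ℝ) * Complex.I)

/-- The region `F_{ij}`: the union of the disk of radius `1 + (in+j)ε` around the
origin with the `(in+j)ε`-neighborhoods of the segments from the origin to `p_i`
and to `p_j`. -/
noncomputable def bearEars (n : ℕ) (i j : Fin n) (ε : ℝ) : Set ℂ :=
  Metric.closedBall 0 (1 + ((i : ℕ) * n + (j : ℕ)) * ε) ∪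
    Metric.cthickening (((i : ℕ) * n + (j : ℕ)) * ε) (segment ℝ 0 (evenPt n i)) ∪
    Metric.cthickening (((i : ℕ) * n + (j : ℕ)) * ε) (segment ℝ 0 (evenPt n j))

lemma norm_evenPt (n : ℕ) (k : Fin n) : ‖evenPt n k‖ = 2 := by
  unfold evenPt
  rw [norm_mul, Complex.norm_exp_ofReal_mul_I]
  simp

lemma evenPt_eq_pow (n : ℕ) (k : Fin n) :
    evenPt n k = 2 * Complex.exp (2 * Real.pi * Complex.I / n) ^ (k : ℕ) := by
  unfold evenPt
  congr 1
  rw [← Complex.exp_nat_mul]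
  congr 1
  push_cast
  ring

lemma evenPt_inj (n : ℕ) (hn : n ≠ 0) : Function.Injective (evenPt n) := by
  intro a b hab
  have hζ := Complex.isPrimitiveRoot_exp n hn
  rw [evenPt_eq_pow, evenPt_eq_pow] at hab
  have h2 : (2 : ℂ) ≠ 0 := two_ne_zero
  have := mul_left_cancel₀ h2 hab
  exact Fin.ext (hζ.pow_inj a.isLt b.isLt this)

lemma evenPt_not_mem_segment (n : ℕ) (hn : n ≠ 0) {i k : Fin n} (h : k ≠ i) :
    evenPt n k ∉ segment ℝ 0 (evenPt n i) := by
  intro hmem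
  rw [segment_eq_image] at hmem
  obtain ⟨t, ht, hts⟩ := hmem
  simp only [smul_zero, zero_add] at hts
  have hnorm : ‖evenPt n k‖ = ‖t • evenPt n i‖ := by rw [hts]
  rw [norm_smul, norm_evenPt, norm_evenPt, Real.norm_eq_abs,
    abs_of_nonneg ht.1] at hnorm
  have ht1 : t = 1 := by linarith
  rw [ht1, one_smul] at hts
  exact h (evenPt_inj n hn hts.symm)

lemma isClosed_segment' (x y : ℂ) : IsClosed (segment ℝ x y) := by
  rw [segment_eq_image]
  exact (isCompact_Icc.image (by fun_prop)).isClosed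

/-- For all sufficiently small `ε > 0`, each region `F_{ij}` contains exactly the two
points `p_i` and `p_j` among the `n` points evenly placed on a circle of radius 2;
hence the Delaunay-graph of the point set with respect to the family `{F_{ij}}` is
the complete graph `K_n`. -/
theorem bearEars_contains_exactly_two (n : ℕ) (hn : 3 ≤ n) :
    ∃ ε₀ > (0 : ℝ), ∀ ε : ℝ, 0 < ε → ε ≤ ε₀ → ∀ i j : Fin n, i ≠ j →
      {k : Fin n | evenPt n k ∈ bearEars n i j ε} = {i, j} := by
  have hn0 : n ≠ 0 := by omega
  have hnpos : (0:ℝ) < (n:ℝ) := by positivity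
  -- minimum distance
  have hne : (Finset.univ : Finset (Fin n × Fin n)).Nonempty := by
    refine ⟨(⟨0, by omega⟩, ⟨0, by omega⟩), Finset.mem_univ _⟩
  set f : Fin n × Fin n → ℝ := fun p =>
    if p.2 = p.1 then 1 else Metric.infDist (evenPt n p.2) (segment ℝ 0 (evenPt n p.1)) with hf
  set m : ℝ := Finset.univ.inf' hne f with hm
  have hfpos : ∀ p : Fin n × Fin n, 0 < f p := by
    intro p
    rw [hf]
    by_cases hp : p.2 = p.1
    · simp [hp]
    · simp only [hp, if_false]
      rw [← (isClosed_segment' 0 (evenPt n p.1)).notMem_iff_infDist_pos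
        ⟨0, left_mem_segment ℝ 0 (evenPt n p.1)⟩]
      exact evenPt_not_mem_segment n hn0 hp
  have hmpos : 0 < m := by
    rw [hm, Finset.lt_inf'_iff]
    exact fun p _ => hfpos p
  refine ⟨min 1 m / (2 * (n:ℝ)^2), by positivity, ?_⟩
  intro ε hε hεle i j hij
  set δ : ℝ := ((i : ℕ) * n + (j : ℕ)) * ε with hδ
  have hδ0 : 0 ≤ δ := by positivity
  have hcoef : ((i : ℕ) * n + (j : ℕ) : ℝ) ≤ (n:ℝ)^2 := by
    have h : (i : ℕ) * n + (j : ℕ) ≤ n^2 := by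
      have h1 := i.isLt; have h2 := j.isLt; nlinarith
    exact_mod_cast h
  have hδlt : δ ≤ min 1 m / 2 := by
    have hc0 : (0:ℝ) ≤ ((i : ℕ) * n + (j : ℕ) : ℝ) := by positivity
    have hn2 : (0:ℝ) < (n:ℝ)^2 := by positivity
    calc δ ≤ (n:ℝ)^2 * ε := by rw [hδ]; nlinarith
      _ ≤ (n:ℝ)^2 * (min 1 m / (2 * (n:ℝ)^2)) := by nlinarith
      _ = min 1 m / 2 := by field_simp
  have hδlt1 : δ < 1 := by
    have h1 : min 1 m / 2 < 1 := by
      have := min_le_left 1 m; linarith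
    linarith
  have hδltm : δ < m := by
    have h1 : min 1 m / 2 < m := by
      have := min_le_right 1 m; linarith
    linarith
  -- not in cthickening of segment to l when k ≠ l
  have hkey : ∀ k l : Fin n, k ≠ l →
      evenPt n k ∉ Metric.cthickening δ (segment ℝ 0 (evenPt n l)) := by
    intro k l hkl hmem
    have h1 : Metric.infDist (evenPt n k) (segment ℝ 0 (evenPt n l)) ≤ δ := by
      rw [Metric.mem_cthickening_iff] at hmem
      exact ENNReal.toReal_le_of_le_ofReal hδ0 hmem
    have h2 : m ≤ f (l, k) := Finset.inf'_le f (Finset.mem_univ _)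
    rw [hf] at h2
    simp only [hkl, if_false] at h2
    linarith
  ext k
  simp only [Set.mem_setOf_eq, Set.mem_insert_iff, Set.mem_singleton_iff]
  constructor
  · intro h
    by_contra hk
    push_neg at hk
    obtain ⟨hki, hkj⟩ := hk
    rcases h with (h | h) | h
    · rw [Metric.mem_closedBall, dist_zero_right, norm_evenPt] at h
      linarith
    · exact hkey k i hki h
    · exact hkey k j hkj h
  · rintro (rfl | rfl)
    · exact Or.inl (Or.inr (Metric.self_subset_cthickening _ (right_mem_segment ℝ 0 _)))
    · exact Or.inr (Metric.self_subset_cthickening _ (right_mem_segment ℝ 0 _))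
end
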